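/- Let g : [a,b] → ℝ be C² with a < 0 < b, g(0)=0, g'(0)=1, x·g(x)>0 for x ∈ [a,b]\{0}, and G(x)=∫₀ˣ g(t)dt. If x·g''(x) > 0 for all x ∈ [a,b]\{0}, then g(x)² - 2 G(x) g'(x) < 0 for all x ∈ [a,b]\{0}, and consequently x · d/dx(g(x)/x) > 0 for all x ∈ [a,b]\{0}. -/

import Mathlib

open Set intervalIntegral

theorem thm21_decreasing_chain (g : ℝ → ℝ) (a b : ℝ) (ha : a < 0) (hb : 0 < b)
    (hg : ContDiff ℝ 2 g) (h0 : g 0 = 0) (h1 : deriv g 0 = 1)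
    (hxg : ∀ x ∈ Icc a b, x ≠ 0 → 0 < x * g x)
    (G : ℝ → ℝ) (hG : ∀ x, G x = ∫ t in (0:ℝ)..x, g t)
    (hconv : ∀ x ∈ Icc a b, x ≠ 0 → 0 < x * iteratedDeriv 2 g x) :
    (∀ x ∈ Icc a b, x ≠ 0 → g x ^ 2 - 2 * G x * deriv g x < 0) ∧
    (∀ x ∈ Icc a b, x ≠ 0 → 0 < x * deriv (fun y => g y / y) x) := by
  have hgc : Continuous g := hg.continuous
  have hg2 : ContDiff ℝ (1 + 1) g := by exact_mod_cast hg
  have hg1 : ContDiff ℝ 1 (deriv g) := (contDiff_succ_iff_deriv.mp hg2).2.2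
  have hgd : Differentiable ℝ g := hg.differentiable (by norm_num)
  have hgd' : Differentiable ℝ (deriv g) := hg1.differentiable (by norm_num)
  have hconv' : ∀ x ∈ Icc a b, x ≠ 0 → 0 < x * deriv (deriv g) x := by
    intro x hx hne
    have := hconv x hx hne
    simpa [iteratedDeriv_succ, iteratedDeriv_one] using this
  have hG' : ∀ x, HasDerivAt (fun y => ∫ t in (0:ℝ)..y, g t) (g x) x := fun x =>
    (hgc.integral_hasStrictDerivAt 0 x).hasDerivAt
  -- positivity of G
  have hGpos : ∀ x ∈ Icc a b, x ≠ 0 → 0 < ∫ t in (0:ℝ)..x, g t := by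
    intro x hx hne
    rcases hne.lt_or_gt with hlt | hlt
    · -- x < 0
      have hneg : 0 < ∫ t in x..(0:ℝ), -g t := by
        apply intervalIntegral_pos_of_pos_on (hgc.neg.intervalIntegrable x 0)
        · intro t ht
          have htm : t ∈ Icc a b := ⟨le_of_lt (lt_of_le_of_lt hx.1 ht.1), le_trans ht.2.le hb.le⟩
          have := hxg t htm (ne_of_lt ht.2)
          simp only [Pi.neg_apply]
          nlinarith [ht.2]
        · exact hlt
      have : (∫ t in x..(0:ℝ), -g t) = ∫ t in (0:ℝ)..x, g t := by
        rw [intervalIntegral.integral_neg, intervalIntegral.integral_symm, neg_neg]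
      linarith [this ▸ hneg]
    · -- 0 < x
      apply intervalIntegral_pos_of_pos_on (hgc.intervalIntegrable 0 x)
      · intro t ht
        have htm : t ∈ Icc a b := ⟨le_of_lt (lt_trans ha ht.1), le_trans ht.2.le hx.2⟩
        have := hxg t htm (ne_of_gt ht.1)
        nlinarith [ht.1]
      · exact hlt
  set Gi : ℝ → ℝ := fun y => ∫ t in (0:ℝ)..y, g t with hGi
  have hG0 : Gi 0 = 0 := by simp [hGi]
  -- F and its derivative
  set F : ℝ → ℝ := fun y => g y ^ 2 - 2 * Gi y * deriv g y with hF
  have hFderiv : ∀ x, HasDerivAt F (-(2 * Gi x * deriv (deriv g) x)) x := by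
    intro x
    have h1' := (hgd x).hasDerivAt
    have h2' := hG' x
    have h3' := (hgd' x).hasDerivAt
    have := ((h1'.pow 2).sub (((h2'.const_mul 2).mul h3')))
    exact this.congr_deriv (by norm_num)
  have hF0 : F 0 = 0 := by simp [hF, h0, hG0]
  have hFcont : Continuous F :=
    ((hgd.continuous.pow 2).sub ((continuous_const.mul (by
      exact continuous_primitive (fun a b => hgc.intervalIntegrable a b) 0)).mul hgd'.continuous))
  -- φ and its derivative
  set φ : ℝ → ℝ := fun y => y * deriv g y - g y with hφ
  have hφderiv : ∀ x, HasDerivAt φ (x * deriv (deriv g) x) x := by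
    intro x
    have h1' := (hgd x).hasDerivAt
    have h3' := (hgd' x).hasDerivAt
    have := ((hasDerivAt_id x).mul h3').sub h1'
    exact this.congr_deriv (by simp only [id]; ring)
  have hφ0 : φ 0 = 0 := by simp [hφ, h0]
  have hφcont : Continuous φ := ((continuous_id.mul hgd'.continuous)).sub hgd.continuous
  -- sign of F
  have hFneg : ∀ x ∈ Icc a b, x ≠ 0 → F x < 0 := by
    intro x hx hne
    rcases hne.lt_or_gt with hlt | hlt
    · -- x < 0 : F strictly mono on [x,0], F x < F 0 = 0
      have hmono : StrictMonoOn F (Icc x 0) := by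
        apply strictMonoOn_of_deriv_pos (convex_Icc x 0) hFcont.continuousOn
        intro y hy
        rw [interior_Icc] at hy
        have hym : y ∈ Icc a b := ⟨le_trans hx.1 hy.1.le, le_trans hy.2.le hb.le⟩
        have hGy := hGpos y hym (ne_of_lt hy.2)
        have hgy := hconv' y hym (ne_of_lt hy.2)
        rw [(hFderiv y).deriv]
        nlinarith [hy.2]
      have := hmono (left_mem_Icc.mpr hlt.le) (right_mem_Icc.mpr hlt.le) hlt
      rwa [hF0] at this
    · have hmono : StrictAntiOn F (Icc 0 x) := by
        apply strictAntiOn_of_deriv_neg (convex_Icc 0 x) hFcont.continuousOn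
        intro y hy
        rw [interior_Icc] at hy
        have hym : y ∈ Icc a b := ⟨le_of_lt (lt_trans ha hy.1), le_trans hy.2.le hx.2⟩
        have hGy := hGpos y hym (ne_of_gt hy.1)
        have hgy := hconv' y hym (ne_of_gt hy.1)
        rw [(hFderiv y).deriv]
        nlinarith [hy.1]
      have := hmono (left_mem_Icc.mpr hlt.le) (right_mem_Icc.mpr hlt.le) hlt
      rwa [hF0] at this
  -- sign of φ : x * φ x > 0
  have hφpos : ∀ x ∈ Icc a b, x ≠ 0 → 0 < x * φ x := by
    intro x hx hne
    rcases hne.lt_or_gt with hlt | hlt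
    · have hmono : StrictMonoOn φ (Icc x 0) := by
        apply strictMonoOn_of_deriv_pos (convex_Icc x 0) hφcont.continuousOn
        intro y hy
        rw [interior_Icc] at hy
        have hym : y ∈ Icc a b := ⟨le_trans hx.1 hy.1.le, le_trans hy.2.le hb.le⟩
        have := hconv' y hym (ne_of_lt hy.2)
        rwa [(hφderiv y).deriv]
      have := hmono (left_mem_Icc.mpr hlt.le) (right_mem_Icc.mpr hlt.le) hlt
      rw [hφ0] at this
      nlinarith
    · have hmono : StrictMonoOn φ (Icc 0 x) := by
        apply strictMonoOn_of_deriv_pos (convex_Icc 0 x) hφcont.continuousOn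
        intro y hy
        rw [interior_Icc] at hy
        have hym : y ∈ Icc a b := ⟨le_of_lt (lt_trans ha hy.1), le_trans hy.2.le hx.2⟩
        have := hconv' y hym (ne_of_gt hy.1)
        rwa [(hφderiv y).deriv]
      have := hmono (left_mem_Icc.mpr hlt.le) (right_mem_Icc.mpr hlt.le) hlt
      rw [hφ0] at this
      nlinarith
  constructor
  · intro x hx hne
    have := hFneg x hx hne
    rw [hG x]
    simpa [hF, hGi] using this
  · intro x hx hne
    have hd : deriv (fun y => g y / y) x = (deriv g x * x - g x * 1) / x ^ 2 := by
      exact ((hgd x).hasDerivAt.div (hasDerivAt_id x) hne).deriv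
    rw [hd]
    have h2 : 0 < x ^ 2 := by positivity
    have hφx := hφpos x hx hne
    have : x * ((deriv g x * x - g x * 1) / x ^ 2) = (x * φ x) / x ^ 2 := by
      simp only [hφ]; ring
    rw [this]
    exact div_pos hφx h2
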